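/- Let (V, Q) be a positive definite quadratic space over ℚ and let x₁, x₂ ∈ V be linearly independent with integer Gram matrix G = (B(x_i, x_j)). If det G is a perfect square, then every nonzero vector x in the span ℚx₁ + ℚx₂ satisfies ν₃(Q(x)) ≡ ν₃(Q(x₁)) (mod 2); consequently, 3·Q(x₁) is not represented by ℚx₁ + ℚx₂. -/

import Mathlib

lemma zmod3_aux : ∀ x y : ZMod 3, x^2+y^2 = 0 → x = 0 ∧ y = 0 := by decide

lemma key_int : ∀ n : ℕ, ∀ u v : ℤ, u.natAbs + v.natAbs ≤ n → u^2 + v^2 ≠ 0 →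
    padicValInt 3 (u^2 + v^2) % 2 = 0 := by
  haveI : Fact (Nat.Prime 3) := ⟨by norm_num⟩
  intro n
  induction n using Nat.strong_induction_on with
  | _ n ih =>
    intro u v hn h
    by_cases h3 : (3:ℤ) ∣ u ∧ (3:ℤ) ∣ v
    · obtain ⟨⟨a, rfl⟩, ⟨b, rfl⟩⟩ := h3
      have hab : a^2 + b^2 ≠ 0 := fun h0 => h (by rw [show (3*a)^2+(3*b)^2 = 9*(a^2+b^2) by ring, h0, mul_zero])
      have hm : a.natAbs ≠ 0 ∨ b.natAbs ≠ 0 := by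
        by_contra hc; push_neg at hc
        exact hab (by rw [Int.natAbs_eq_zero.1 hc.1, Int.natAbs_eq_zero.1 hc.2]; ring)
      have h9 : padicValInt 3 (9:ℤ) = 2 := by
        rw [show (9:ℤ) = ((3^2 : ℕ) : ℤ) by norm_num, padicValInt.of_nat, padicValNat.prime_pow]
      rw [show (3*a)^2+(3*b)^2 = 9*(a^2+b^2) by ring,
        padicValInt.mul (by norm_num) hab, h9]
      have h3a : (3*a).natAbs = 3 * a.natAbs := by rw [Int.natAbs_mul]; rfl
      have h3b : (3*b).natAbs = 3 * b.natAbs := by rw [Int.natAbs_mul]; rfl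
      have hlt : a.natAbs + b.natAbs < n := by omega
      have := ih _ hlt a b le_rfl hab
      omega
    · have hnd : ¬ (3:ℤ) ∣ (u^2+v^2) := by
        intro hd
        apply h3
        have : ((u^2+v^2 : ℤ) : ZMod 3) = 0 := (ZMod.intCast_zmod_eq_zero_iff_dvd _ _).2 hd
        push_cast at this
        obtain ⟨h1, h2⟩ := zmod3_aux _ _ this
        exact ⟨(ZMod.intCast_zmod_eq_zero_iff_dvd _ _).1 h1, (ZMod.intCast_zmod_eq_zero_iff_dvd _ _).1 h2⟩
      rw [padicValInt.eq_zero_of_not_dvd (by exact_mod_cast hnd)]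
lemma key_rat (u v : ℚ) (h : u ≠ 0 ∨ v ≠ 0) : padicValRat 3 (u^2 + v^2) % 2 = 0 := by
  haveI : Fact (Nat.Prime 3) := ⟨by norm_num⟩
  set U : ℤ := u.num * v.den with hU
  set W : ℤ := v.num * u.den with hW
  set N : ℤ := (u.den : ℤ) * v.den with hN
  have hdu : ((u.den : ℚ)) ≠ 0 := by exact_mod_cast u.den_nz
  have hdv : ((v.den : ℚ)) ≠ 0 := by exact_mod_cast v.den_nz
  have hNne : (N : ℚ) ≠ 0 := by rw [hN]; push_cast; exact mul_ne_zero hdu hdv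
  have hnu : (u.num : ℚ) = u * u.den := by
    exact (Rat.mul_den_eq_num u).symm
  have hnv : (v.num : ℚ) = v * v.den := by
    exact (Rat.mul_den_eq_num v).symm
  have hu : (U : ℚ) = u * N := by
    rw [hU, hN]; push_cast [hnu]; ring
  have hw : (W : ℚ) = v * N := by
    rw [hW, hN]; push_cast [hnv]; ring
  have hUW : ¬ (U = 0 ∧ W = 0) := by
    rintro ⟨h1, h2⟩
    rcases h with h' | h'
    · apply h'; have := hu; rw [h1] at this; push_cast at this
      rcases mul_eq_zero.1 this.symm with h'' | h''
      · exact h''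
      · exact absurd h'' hNne
    · apply h'; have := hw; rw [h2] at this; push_cast at this
      rcases mul_eq_zero.1 this.symm with h'' | h''
      · exact h''
      · exact absurd h'' hNne
  have hUWne : U^2 + W^2 ≠ 0 := by
    rcases not_and_or.1 hUW with h' | h'
    · have : (0:ℤ) < U^2 + W^2 := by positivity
      omega
    · have : (0:ℤ) < U^2 + W^2 := by positivity
      omega
  have huv : u^2 + v^2 ≠ 0 := by
    rcases h with h' | h'
    · have : (0:ℚ) < u^2 + v^2 := by positivity
      exact this.ne'
    · have : (0:ℚ) < u^2 + v^2 := by positivity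
      exact this.ne'
  have hNz : N ≠ 0 := fun h0 => hNne (by rw [h0]; simp)
  have key : ((U^2 + W^2 : ℤ) : ℚ) = (u^2 + v^2) * (N:ℚ)^2 := by
    push_cast [hu, hw]; ring
  have hval : padicValRat 3 ((U^2+W^2 : ℤ) : ℚ) =
      padicValRat 3 (u^2+v^2) + 2 * padicValRat 3 (N:ℚ) := by
    rw [key, padicValRat.mul huv (by positivity), padicValRat.pow (q := (N:ℚ))]
    ring
  have h1 := key_int (U.natAbs + W.natAbs) U W le_rfl hUWne
  rw [padicValRat.of_int] at hval
  have h2 : ((padicValInt 3 (U^2+W^2) : ℤ)) % 2 = 0 := by omega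
  omega
theorem stmt9 (V : Type) [AddCommGroup V] [Module ℚ V] (Q : QuadraticForm ℚ V)
    (hpos : ∀ x : V, x ≠ 0 → 0 < Q x)
    (x₁ x₂ : V) (hli : LinearIndependent ℚ ![x₁, x₂])
    (G : Matrix (Fin 2) (Fin 2) ℤ)
    (hG : ∀ i j, (G i j : ℚ) = QuadraticMap.polar (⇑Q) (![x₁, x₂] i) (![x₁, x₂] j) / 2)
    (hsq : IsSquare G.det) :
    (∀ a b : ℚ, a • x₁ + b • x₂ ≠ 0 →
      padicValRat 3 (Q (a • x₁ + b • x₂)) % 2 = padicValRat 3 (Q x₁) % 2) ∧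
    ¬ ∃ a b : ℚ, Q (a • x₁ + b • x₂) = 3 * Q x₁ := by
  haveI : Fact (Nat.Prime 3) := ⟨by norm_num⟩
  obtain ⟨r, hr⟩ := hsq
  have hx₁ : x₁ ≠ 0 := by
    have := hli.ne_zero 0; simpa using this
  have hα : ((G 0 0 : ℤ) : ℚ) = Q x₁ := by
    have := hG 0 0
    simp only [Matrix.cons_val_zero] at this
    rw [this, QuadraticMap.polar_self]
    ring
  have hγ : ((G 1 1 : ℤ) : ℚ) = Q x₂ := by
    have := hG 1 1
    simp only [Matrix.cons_val_one, Matrix.head_cons, Matrix.cons_val_zero] at this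
    rw [this, QuadraticMap.polar_self]
    ring
  have hβ : 2 * ((G 0 1 : ℤ) : ℚ) = QuadraticMap.polar (⇑Q) x₁ x₂ := by
    have := hG 0 1
    simp only [Matrix.cons_val_zero, Matrix.cons_val_one, Matrix.head_cons] at this
    rw [this]; ring
  have hsym : G 1 0 = G 0 1 := by
    have h1 := hG 1 0
    have h2 := hG 0 1
    simp only [Matrix.cons_val_zero, Matrix.cons_val_one, Matrix.head_cons] at h1 h2
    have : ((G 1 0 : ℤ) : ℚ) = ((G 0 1 : ℤ) : ℚ) := by
      rw [h1, h2, QuadraticMap.polar_comm]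
    exact_mod_cast this
  have hdet : (r : ℚ) * r = (G 0 0 : ℚ) * (G 1 1) - (G 0 1) * (G 0 1) := by
    have := hr
    rw [Matrix.det_fin_two, hsym] at this
    exact_mod_cast this.symm
  -- expansion
  have hQ : ∀ a b : ℚ, Q (a • x₁ + b • x₂) =
      a^2 * (G 0 0 : ℚ) + 2 * a * b * (G 0 1 : ℚ) + b^2 * (G 1 1 : ℚ) := by
    intro a b
    rw [QuadraticMap.map_add (⇑Q) (a • x₁) (b • x₂), Q.map_smul, Q.map_smul,
      QuadraticMap.polar_smul_left, QuadraticMap.polar_smul_right, ← hα, ← hγ]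
    have : QuadraticMap.polar (⇑Q) x₁ x₂ = 2 * (G 0 1 : ℚ) := hβ.symm
    rw [this]
    simp only [smul_eq_mul]
    ring
  have hQx₁pos : 0 < Q x₁ := hpos x₁ hx₁
  have part1 : ∀ a b : ℚ, a • x₁ + b • x₂ ≠ 0 →
      padicValRat 3 (Q (a • x₁ + b • x₂)) % 2 = padicValRat 3 (Q x₁) % 2 := by
    intro a b hne
    have hQpos : 0 < Q (a • x₁ + b • x₂) := hpos _ hne
    set α : ℚ := (G 0 0 : ℚ) with hαdef
    set β : ℚ := (G 0 1 : ℚ) with hβdef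
    set γ : ℚ := (G 1 1 : ℚ) with hγdef
    have hαpos : 0 < α := by rw [hα]; exact hQx₁pos
    have hident : α * Q (a • x₁ + b • x₂) = (a * α + b * β)^2 + ((r : ℚ) * b)^2 := by
      rw [hQ a b]
      have : (r:ℚ) * r = α * γ - β * β := hdet
      nlinarith [this]
    have hne2 : (a * α + b * β) ≠ 0 ∨ (r : ℚ) * b ≠ 0 := by
      by_contra hc
      push_neg at hc
      have : α * Q (a • x₁ + b • x₂) = 0 := by rw [hident, hc.1, hc.2]; ring
      have h' := mul_pos hαpos hQpos
      rw [this] at h'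
      exact lt_irrefl _ h'
    have hkey := key_rat _ _ hne2
    rw [← hident] at hkey
    rw [padicValRat.mul hαpos.ne' hQpos.ne'] at hkey
    have hv₁ : padicValRat 3 (Q x₁) = padicValRat 3 α := by rw [hα]
    omega
  refine ⟨part1, ?_⟩
  rintro ⟨a, b, heq⟩
  have h3pos : 0 < 3 * Q x₁ := by linarith
  have hne : a • x₁ + b • x₂ ≠ 0 := by
    intro h0
    rw [h0] at heq
    simp at heq
    linarith
  have := part1 a b hne
  rw [heq] at this
  rw [padicValRat.mul (by norm_num) hQx₁pos.ne'] at this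
  have h3 : padicValRat 3 (3:ℚ) = 1 := by
    have := padicValRat.self (p := 3) (by norm_num)
    exact_mod_cast this
  rw [h3] at this
  omega
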